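/- Let a generalized-Diamond datum with parameter M ≥ 2 and constant C = C_{r(x)} be given. For each 1 ≤ ℓ ≤ n, let f_ℓ(x) = (α_ℓ + β_ℓ·x)·log(α_ℓ + β_ℓ·x). Then |T_{[t_{ℓ−1}+1, t_ℓ]}(f_ℓ) − ∫_{t_{ℓ−1}+1}^{t_ℓ} f_ℓ(x) dx| ≤ 3·C·M·log(2·C·M). -/

import Mathlib

open scoped Real Classical

noncomputable section

private lemma integ_linear (a b m : ℝ) :
    (∫ x in a..b, (x - m)) = (b^2 - a^2)/2 - m*(b-a) := by
  rw [intervalIntegral.integral_sub intervalIntegral.intervalIntegrable_id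
      (intervalIntegrable_const), integral_id,
      intervalIntegral.integral_const, smul_eq_mul]
  ring

private lemma trap_step (f g : ℝ → ℝ) (a : ℝ)
    (hderiv : ∀ x ∈ Set.Icc a (a+1), HasDerivAt f (g x) x)
    (hcont : ContinuousOn g (Set.Icc a (a+1)))
    (hmono : MonotoneOn g (Set.Icc a (a+1))) :
    0 ≤ (f a + f (a+1))/2 - ∫ x in a..(a+1), f x ∧
      (f a + f (a+1))/2 - (∫ x in a..(a+1), f x) ≤ (g (a+1) - g a)/8 := by
  have hle : a ≤ a + 1 := by linarith
  have huIcc : Set.uIcc a (a+1) = Set.Icc a (a+1) := Set.uIcc_of_le hle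
  set m : ℝ := a + 1/2 with hm
  have hm0 : a ≤ m := by rw [hm]; linarith
  have hm2 : m ≤ a + 1 := by rw [hm]; linarith
  have hm1 : m ∈ Set.Icc a (a+1) := ⟨hm0, hm2⟩
  have hgint : IntervalIntegrable g MeasureTheory.volume a (a+1) :=
    (huIcc ▸ hcont).intervalIntegrable
  have hcont2 : ContinuousOn (fun x => g x * (x - m)) (Set.Icc a (a+1)) :=
    hcont.mul (by fun_prop)
  have hint2 : IntervalIntegrable (fun x => g x * (x - m)) MeasureTheory.volume a (a+1) :=
    (huIcc ▸ hcont2).intervalIntegrable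
  have hparts : (∫ x in a..(a+1), f x * (1:ℝ)) =
      f (a+1) * ((a+1) - m) - f a * (a - m) - ∫ x in a..(a+1), g x * (x - m) :=
    intervalIntegral.integral_mul_deriv_eq_deriv_mul
      (u := f) (v := fun x => x - m) (u' := g) (v' := fun _ => (1:ℝ))
      (fun x hx => hderiv x (huIcc ▸ hx))
      (fun x _ => (hasDerivAt_id x).sub_const m)
      hgint intervalIntegrable_const
  have hparts' : (f a + f (a+1))/2 - (∫ x in a..(a+1), f x)
      = ∫ x in a..(a+1), g x * (x - m) := by
    have h1 : (∫ x in a..(a+1), f x) = ∫ x in a..(a+1), f x * (1:ℝ) := by simp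
    rw [h1, hparts, hm]; ring
  constructor
  · rw [hparts']
    have h0 : (∫ x in a..(a+1), g m * (x - m)) = 0 := by
      rw [intervalIntegral.integral_const_mul, integ_linear, hm]; ring
    rw [← h0]
    refine intervalIntegral.integral_mono_on hle
      ((Continuous.intervalIntegrable (by fun_prop) a (a+1)).const_mul (g m)) hint2 ?_
    intro x hx
    rcases le_total x m with h | h
    · have := hmono hx hm1 h
      nlinarith
    · have := hmono hm1 hx h
      nlinarith
  · rw [hparts']
    have hsplit : (∫ x in a..(a+1), g x * (x - m))
        = (∫ x in a..m, g x * (x - m)) + ∫ x in m..(a+1), g x * (x - m) :=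
      (intervalIntegral.integral_add_adjacent_intervals
        (hint2.mono_set (by exact Set.uIcc_subset_uIcc (Set.left_mem_uIcc) (huIcc ▸ hm1 : m ∈ Set.uIcc a (a+1))))
        (hint2.mono_set (by exact Set.uIcc_subset_uIcc (huIcc ▸ hm1 : m ∈ Set.uIcc a (a+1)) Set.right_mem_uIcc))).symm
    rw [hsplit]
    have h1 : (∫ x in a..m, g x * (x - m)) ≤ ∫ x in a..m, g a * (x - m) := by
      refine intervalIntegral.integral_mono_on hm0
        (hint2.mono_set (by exact Set.uIcc_subset_uIcc Set.left_mem_uIcc (huIcc ▸ hm1)))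
        ((Continuous.intervalIntegrable (by fun_prop) a m).const_mul (g a)) ?_
      intro x hx
      have hxI : x ∈ Set.Icc a (a+1) := ⟨hx.1, le_trans hx.2 hm2⟩
      have := hmono (Set.left_mem_Icc.mpr hle) hxI hx.1
      nlinarith [hx.2]
    have h2 : (∫ x in m..(a+1), g x * (x - m)) ≤ ∫ x in m..(a+1), g (a+1) * (x - m) := by
      refine intervalIntegral.integral_mono_on hm2
        (hint2.mono_set (by exact Set.uIcc_subset_uIcc (huIcc ▸ hm1) Set.right_mem_uIcc))
        ((Continuous.intervalIntegrable (by fun_prop) m (a+1)).const_mul (g (a+1))) ?_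
      intro x hx
      have hxI : x ∈ Set.Icc a (a+1) := ⟨le_trans hm0 hx.1, hx.2⟩
      have := hmono hxI (Set.right_mem_Icc.mpr hle) hx.2
      nlinarith [hx.1]
    have e1 : (∫ x in a..m, g a * (x - m)) = g a * (-(1/8)) := by
      rw [intervalIntegral.integral_const_mul, integ_linear, hm]; ring
    have e2 : (∫ x in m..(a+1), g (a+1) * (x - m)) = g (a+1) * (1/8) := by
      rw [intervalIntegral.integral_const_mul, integ_linear, hm]; ring
    rw [e1] at h1; rw [e2] at h2
    linarith

private lemma trap_sum (f g : ℝ → ℝ) (a : ℕ) : ∀ b : ℕ, a + 1 ≤ b →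
    (∀ x ∈ Set.Icc (a:ℝ) (b:ℝ), HasDerivAt f (g x) x) →
    ContinuousOn g (Set.Icc (a:ℝ) (b:ℝ)) →
    MonotoneOn g (Set.Icc (a:ℝ) (b:ℝ)) →
    0 ≤ ((f a + f b)/2 + ∑ j ∈ Finset.Ico (a+1) b, f j) - (∫ x in (a:ℝ)..(b:ℝ), f x) ∧
      ((f a + f b)/2 + ∑ j ∈ Finset.Ico (a+1) b, f j) - (∫ x in (a:ℝ)..(b:ℝ), f x)
        ≤ (g b - g a)/8 := by
  intro b hb
  induction b, hb using Nat.le_induction with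
  | base =>
    intro hderiv hcont hmono
    have cb : ((a+1:ℕ):ℝ) = (a:ℝ)+1 := by push_cast; ring
    simp only [cb] at *
    have := trap_step f g a hderiv hcont hmono
    simpa using this
  | succ b hb ih =>
    intro hderiv hcont hmono
    have cb : ((b+1:ℕ):ℝ) = (b:ℝ)+1 := by push_cast; ring
    have hab : (a:ℝ) ≤ (b:ℝ) := by exact_mod_cast Nat.le_of_succ_le hb
    have hsub1 : Set.Icc (a:ℝ) (b:ℝ) ⊆ Set.Icc (a:ℝ) ((b:ℝ)+1) :=
      Set.Icc_subset_Icc le_rfl (by linarith)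
    have hsub2 : Set.Icc (b:ℝ) ((b:ℝ)+1) ⊆ Set.Icc (a:ℝ) ((b:ℝ)+1) :=
      Set.Icc_subset_Icc hab le_rfl
    simp only [cb] at hderiv hcont hmono ⊢
    have ihr := ih (fun x hx => hderiv x (hsub1 hx)) (hcont.mono hsub1) (hmono.mono hsub1)
    have step := trap_step f g (b:ℝ) (fun x hx => hderiv x (hsub2 hx))
      (hcont.mono hsub2) (hmono.mono hsub2)
    have hfc : ContinuousOn f (Set.Icc (a:ℝ) ((b:ℝ)+1)) :=
      fun x hx => (hderiv x hx).continuousAt.continuousWithinAt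
    have hint1 : IntervalIntegrable f MeasureTheory.volume (a:ℝ) (b:ℝ) :=
      ((hfc.mono hsub1).mono (by rw [Set.uIcc_of_le hab])).intervalIntegrable
    have hint2 : IntervalIntegrable f MeasureTheory.volume (b:ℝ) ((b:ℝ)+1) :=
      ((hfc.mono hsub2).mono (by rw [Set.uIcc_of_le (by linarith : (b:ℝ) ≤ (b:ℝ)+1)])).intervalIntegrable
    have hsplit : (∫ x in (a:ℝ)..((b:ℝ)+1), f x)
        = (∫ x in (a:ℝ)..(b:ℝ), f x) + ∫ x in (b:ℝ)..((b:ℝ)+1), f x :=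
      (intervalIntegral.integral_add_adjacent_intervals hint1 hint2).symm
    have hsum : ∑ j ∈ Finset.Ico (a+1) (b+1), f j
        = (∑ j ∈ Finset.Ico (a+1) b, f j) + f b :=
      Finset.sum_Ico_succ_top hb _
    have hmono1 : (a:ℝ) ∈ Set.Icc (a:ℝ) ((b:ℝ)+1) := by
      constructor <;> linarith
    have hmono2 : (b:ℝ) ∈ Set.Icc (a:ℝ) ((b:ℝ)+1) := by constructor <;> linarith
    constructor
    · rw [hsplit, hsum]; linarith [ihr.1, step.1]
    · rw [hsplit, hsum]; linarith [ihr.2, step.2]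

set_option maxHeartbeats 1000000 in

/-- **Trapezoidal-rule error for `f_ℓ`** (Lemma 3.3 of Beltrán–Etayo, adapted).
For a generalized-Diamond datum with constant `C = C_{r(x)}` and
`f_ℓ(x) = (α ℓ + β ℓ x) log (α ℓ + β ℓ x)`, the composite trapezoidal rule
`T_{[t (ℓ-1)+1, t ℓ]}(f_ℓ)` differs from `∫_{t (ℓ-1)+1}^{t ℓ} f_ℓ` by at most
`3 C M log (2 C M)`. -/
theorem trapezoid_error_f
    (M n : ℕ) (hM : 2 ≤ M) (hn : 1 ≤ n)
    (t α β : ℕ → ℕ)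
    (ht0 : t 0 = 0) (htn : t n = M - 1) (htn1 : t (n+1) = M)
    (htmono : ∀ ℓ, ℓ ≤ n → t ℓ < t (ℓ+1))
    (hβ : 0 < β 1)
    (hrpos : ∀ ℓ, 1 ≤ ℓ → ℓ ≤ n+1 → ∀ j, t (ℓ-1) < j → j ≤ t ℓ → 1 ≤ α ℓ + β ℓ * j)
    (C : ℝ)
    (hC : C = max ((Finset.Icc 1 (n+1)).sup' (Finset.nonempty_Icc.mpr (by omega))
        (fun ℓ => max ((α ℓ : ℝ) / M) (β ℓ))) ((M:ℝ) / (t 1)))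
    (ℓ : ℕ) (hℓ1 : 1 ≤ ℓ) (hℓn : ℓ ≤ n)
    (f : ℝ → ℝ)
    (hf : ∀ x : ℝ, f x = ((α ℓ : ℝ) + (β ℓ : ℝ) * x) * Real.log ((α ℓ : ℝ) + (β ℓ : ℝ) * x)) :
    |((f (t (ℓ-1) + 1) + f (t ℓ)) / 2 + ∑ j ∈ Finset.Ico (t (ℓ-1) + 1 + 1) (t ℓ), f j)
      - ∫ x in ((t (ℓ-1) : ℝ) + 1)..((t ℓ : ℝ)), f x|
    ≤ 3 * C * M * Real.log (2 * C * M) := by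
  have hfeq : f = fun x => ((α ℓ : ℝ) + (β ℓ : ℝ) * x) * Real.log ((α ℓ : ℝ) + (β ℓ : ℝ) * x) :=
    funext hf
  subst hfeq
  beta_reduce
  set αr : ℝ := (α ℓ : ℝ) with hαr
  set βr : ℝ := (β ℓ : ℝ) with hβr
  -- monotonicity of t
  have tmono : ∀ j, j ≤ n + 1 → ∀ i, i ≤ j → t i ≤ t j := by
    intro j
    induction j with
    | zero => intro _ i hi; rw [Nat.le_zero.mp hi]
    | succ j ih =>
      intro hj i hi
      rcases Nat.eq_or_lt_of_le hi with h | h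
      · rw [h]
      · exact le_trans (ih (by omega) i (by omega)) (le_of_lt (htmono j (by omega)))
  set A : ℕ := t (ℓ-1) + 1 with hA
  set B : ℕ := t ℓ with hB
  have hsucc : ℓ - 1 + 1 = ℓ := by omega
  have hAB : t (ℓ-1) < t ℓ := by
    have := htmono (ℓ-1) (by omega); rwa [hsucc] at this
  have hA1 : A ≤ B := hAB
  have htℓM : t ℓ ≤ M := htn1 ▸ tmono (n+1) le_rfl ℓ (by omega)
  have ht1pos : 1 ≤ t 1 := by
    have h : t 0 < t 1 := by simpa using htmono 0 (by omega)
    omega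
  have ht1M : t 1 < M := by
    have h1 : t 1 ≤ t n := tmono n (by omega) 1 hn
    omega
  -- facts about C
  have hMpos : (0:ℝ) < M := by positivity
  have hMr : (2:ℝ) ≤ (M:ℝ) := by exact_mod_cast hM
  have hC1 : 1 < C := by
    have ht1r : (0:ℝ) < (t 1 : ℝ) := by exact_mod_cast ht1pos
    have h1 : (1:ℝ) < (M:ℝ) / (t 1) := by
      rw [lt_div_iff₀ ht1r, one_mul]
      exact_mod_cast ht1M
    calc (1:ℝ) < (M:ℝ) / (t 1) := h1
    _ ≤ C := hC ▸ le_max_right _ _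
  have hC0 : (0:ℝ) < C := by linarith
  have hℓmem : ℓ ∈ Finset.Icc 1 (n+1) := Finset.mem_Icc.mpr ⟨hℓ1, by omega⟩
  have hsupC : max (αr / M) βr ≤ C := by
    rw [hC]
    exact le_trans (Finset.le_sup' (fun k => max ((α k : ℝ) / M) (β k)) hℓmem) (le_max_left _ _)
  have hβC : βr ≤ C := le_trans (le_max_right _ _) hsupC
  have hαC : αr ≤ C * M := by
    have := le_trans (le_max_left _ _) hsupC
    rw [div_le_iff₀ hMpos] at this; linarith
  have hβ0 : (0:ℝ) ≤ βr := by positivity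
  have hlog2CM : (0:ℝ) ≤ Real.log (2*C*M) := Real.log_nonneg (by nlinarith)
  have hCM0 : (0:ℝ) ≤ C * M := by positivity
  -- value bounds for r
  have hrA : 1 ≤ α ℓ + β ℓ * A := hrpos ℓ hℓ1 (by omega) A (by omega) hA1
  have hrAr : (1:ℝ) ≤ αr + βr * (A:ℝ) := by
    rw [hαr, hβr]; exact_mod_cast hrA
  have hR1 : ∀ x : ℝ, (A:ℝ) ≤ x → 1 ≤ αr + βr * x := by
    intro x hx
    nlinarith [mul_le_mul_of_nonneg_left hx hβ0]
  have hR2 : ∀ x : ℝ, 0 ≤ x → x ≤ (M:ℝ) → αr + βr * x ≤ 2*C*M := by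
    intro x hx0 hxM
    have : βr * x ≤ C * M := mul_le_mul hβC hxM hx0 hC0.le
    linarith
  have hAM : (A:ℝ) ≤ (M:ℝ) := by exact_mod_cast le_trans hA1 htℓM
  have hA0 : (0:ℝ) ≤ (A:ℝ) := by positivity
  have cA : ((A:ℕ):ℝ) = (t (ℓ-1) : ℝ) + 1 := by rw [hA]; push_cast; ring
  -- upper bound for f values
  rcases eq_or_lt_of_le hA1 with heq | hlt
  · -- degenerate case A = B
    have hBA : (B:ℝ) = (t (ℓ-1):ℝ) + 1 := by rw [← heq, cA]
    rw [hBA]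
    have hico : Finset.Ico (t (ℓ-1) + 1 + 1) (t ℓ) = ∅ := by
      apply Finset.Ico_eq_empty; omega
    rw [hico, Finset.sum_empty, intervalIntegral.integral_same]
    set R : ℝ := αr + βr * ((t (ℓ-1):ℝ) + 1) with hR
    have hR1' : (1:ℝ) ≤ R := by rw [hR, ← cA]; exact hrAr
    have hR2' : R ≤ 2*C*M := by
      rw [hR, ← cA]; exact hR2 _ hA0 hAM
    have hval : ((R * Real.log R + R * Real.log R) / 2 + 0 - 0) = R * Real.log R := by ring
    have hlogR : Real.log R ≤ Real.log (2*C*M) := Real.log_le_log (by linarith) hR2'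
    have hlogR0 : 0 ≤ Real.log R := Real.log_nonneg hR1'
    rw [hval, abs_of_nonneg (mul_nonneg (by linarith) hlogR0)]
    nlinarith [mul_le_mul_of_nonneg_left hlogR (by linarith : (0:ℝ) ≤ R),
      mul_le_mul_of_nonneg_right hR2' hlog2CM, mul_nonneg hCM0 hlog2CM]
  · -- main case A < B
    have hderiv : ∀ x ∈ Set.Icc (A:ℝ) (B:ℝ), HasDerivAt
        (fun x => (αr + βr * x) * Real.log (αr + βr * x))
        (βr * (Real.log (αr + βr * x) + 1)) x := by
      intro x hx
      have hx1 : (1:ℝ) ≤ αr + βr * x := hR1 x hx.1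
      have hne : αr + βr * x ≠ 0 := by linarith
      have h1 : HasDerivAt (fun y : ℝ => αr + βr * y) βr x := by
        simpa using ((hasDerivAt_id x).const_mul βr).const_add αr
      have h2 : HasDerivAt (fun y => Real.log (αr + βr * y)) ((αr + βr * x)⁻¹ * βr) x :=
        by have h := (Real.hasDerivAt_log hne).comp x h1; exact h
      have h3 : HasDerivAt (fun y => (αr + βr * y) * Real.log (αr + βr * y))
          (βr * Real.log (αr + βr * x) + (αr + βr * x) * ((αr + βr * x)⁻¹ * βr)) x := h1.mul h2
      convert h3 using 1
      simp only [← mul_assoc, mul_inv_cancel₀ hne, one_mul]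
      ring
    have hcontg : ContinuousOn (fun x => βr * (Real.log (αr + βr * x) + 1))
        (Set.Icc (A:ℝ) (B:ℝ)) := by
      apply continuousOn_const.mul
      apply ContinuousOn.add _ continuousOn_const
      apply Real.continuousOn_log.comp (by fun_prop)
      intro x hx
      have := hR1 x hx.1
      simp only [Set.mem_compl_iff, Set.mem_singleton_iff]
      intro h; rw [h] at this; linarith
    have hmonog : MonotoneOn (fun x => βr * (Real.log (αr + βr * x) + 1))
        (Set.Icc (A:ℝ) (B:ℝ)) := by
      intro x hx y hy hxy
      have hx1 := hR1 x hx.1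
      have hlog : Real.log (αr + βr * x) ≤ Real.log (αr + βr * y) :=
        Real.log_le_log (by linarith) (by nlinarith [mul_le_mul_of_nonneg_left hxy hβ0])
      simp only
      nlinarith [mul_le_mul_of_nonneg_left hlog hβ0]
    have key := trap_sum (fun x => (αr + βr * x) * Real.log (αr + βr * x))
      (fun x => βr * (Real.log (αr + βr * x) + 1)) A B hlt hderiv hcontg hmonog
    rw [cA] at key
    rw [hA] at key
    rw [abs_sub_le_iff]
    have hgA0 : 0 ≤ βr * (Real.log (αr + βr * (A:ℝ)) + 1) := by
      have := Real.log_nonneg hrAr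
      nlinarith
    have hRB2 : αr + βr * (B:ℝ) ≤ 2*C*M := by
      apply hR2 _ (by positivity)
      exact_mod_cast htℓM
    have hlogB : Real.log (αr + βr * (B:ℝ)) ≤ Real.log (2*C*M) := by
      apply Real.log_le_log _ hRB2
      have := hR1 (B:ℝ) (by exact_mod_cast hA1)
      linarith
    have hlogA0 : 0 ≤ Real.log (αr + βr * (A:ℝ)) := Real.log_nonneg hrAr
    have hgdiff : βr * (Real.log (αr + βr * (B:ℝ)) + 1)
        - βr * (Real.log (αr + βr * ((A:ℕ):ℝ)) + 1) ≤ C * Real.log (2*C*M) := by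
      rw [show ((A:ℕ):ℝ) = (A:ℝ) from rfl]
      have hlogB0 : 0 ≤ Real.log (αr + βr * (B:ℝ)) := by
        apply Real.log_nonneg
        exact hR1 (B:ℝ) (by exact_mod_cast hA1)
      nlinarith
    constructor
    · have h2 := key.2
      rw [cA] at hgdiff
      have hMr : (2:ℝ) ≤ (M:ℝ) := by exact_mod_cast hM
      nlinarith [key.2]
    · have := key.1
      nlinarith [hlog2CM, hC0, hMpos]
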